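/- Let X be the unital ℝ-algebra with generators x₁,…,x_N and relations Σ_{k,l} R̂⁻{}^{kl}_{ij} x_k x_l = q⁻¹ x_i x_j + ((q^{N−1}−q^{N−3})/(1+q^{N−2}))·Σ_{k,l} K^{kl}_{ij} x_k x_l and Σ_{k,l} C^{kl} x_k x_l = 1. Then the assignment x_i ↦ Σ_j C^{ij} x_j extends to a well-defined algebra anti-homomorphism of X whose square is the identity (an involution on X). -/

import Mathlib

open Matrix BigOperators

noncomputable section

/-- The standard `O_q(N)` exponents ρ_i; here `i : Fin N` is 0-based, so the
1-based index of the paper is `i.val + 1`. -/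
def rho (N : ℕ) (i : Fin N) : ℝ :=
  if 2 * ((i : ℕ) + 1) < N + 1 then (N : ℝ) / 2 - ((i : ℕ) + 1)
  else if 2 * ((i : ℕ) + 1) = N + 1 then 0
  else (N : ℝ) / 2 - ((i : ℕ) + 1) + 1

/-- The index map i ↦ i' = N+1−i (in 1-based indexing). -/
def pr {N : ℕ} (i : Fin N) : Fin N := i.rev

/-- The metric matrix C with entries C^{ij} = q^{−ρ_i} δ_{i,j'}. -/
def Cmat (q : ℝ) (N : ℕ) : Matrix (Fin N) (Fin N) ℝ :=
  fun i j => if j = pr i then Real.rpow q (-(rho N i)) else 0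

/-- The matrix K with entries K^{kl}_{ij} = C^{ij} C_{kl}; the row index is (k,l),
the column index is (i,j), so that matrix multiplication realises the composition
(K²)^{kl}_{ij} = Σ_{m,n} K^{kl}_{mn} K^{mn}_{ij}. -/
def Kmat (q : ℝ) (N : ℕ) : Matrix (Fin N × Fin N) (Fin N × Fin N) ℝ :=
  fun p r => Cmat q N r.1 r.2 * Cmat q N p.1 p.2

/-- The O_q(N) R-matrix R̂ with entries
R̂^{kl}_{ij} = q^{(k=l)−(k=l')}(i=l)(j=k) + (q−q⁻¹)(i<l)((i=k)(j=l) − K^{kl}_{ij});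
row index p = (k,l), column index r = (i,j). -/
def Rhat (q : ℝ) (N : ℕ) : Matrix (Fin N × Fin N) (Fin N × Fin N) ℝ :=
  fun p r =>
    q ^ (((if p.1 = p.2 then 1 else 0) - (if p.1 = pr p.2 then 1 else 0) : ℤ)) *
      (if r.1 = p.2 then 1 else 0) * (if r.2 = p.1 then 1 else 0)
    + (q - q⁻¹) * (if r.1 < p.2 then 1 else 0) *
      ((if r.1 = p.1 then 1 else 0) * (if r.2 = p.2 then 1 else 0) - Kmat q N p r)

/-- R̂⁻ = R̂ − (q−q⁻¹)·I + (q−q⁻¹)·K. -/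
def Rm (q : ℝ) (N : ℕ) : Matrix (Fin N × Fin N) (Fin N × Fin N) ℝ :=
  Rhat q N - (q - q⁻¹) • (1 : Matrix (Fin N × Fin N) (Fin N × Fin N) ℝ)
    + (q - q⁻¹) • Kmat q N

/-- The defining relations of the quantum Euclidean sphere S_q^{N−1} in the
free algebra on the generators x₁,…,x_N. -/
inductive sphereRel (q : ℝ) (N : ℕ) :
    FreeAlgebra ℝ (Fin N) → FreeAlgebra ℝ (Fin N) → Prop
  | quad (i j : Fin N) : sphereRel q N
      (∑ k : Fin N, ∑ l : Fin N,
        Rm q N (k, l) (i, j) • (FreeAlgebra.ι ℝ k * FreeAlgebra.ι ℝ l))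
      (q⁻¹ • (FreeAlgebra.ι ℝ i * FreeAlgebra.ι ℝ j) +
        ((q ^ (N - 1) - q ^ (N - 3)) / (1 + q ^ (N - 2))) •
          ∑ k : Fin N, ∑ l : Fin N,
            Kmat q N (k, l) (i, j) • (FreeAlgebra.ι ℝ k * FreeAlgebra.ι ℝ l))
  | unit : sphereRel q N
      (∑ k : Fin N, ∑ l : Fin N,
        Cmat q N k l • (FreeAlgebra.ι ℝ k * FreeAlgebra.ι ℝ l)) 1

/-- The coordinate algebra of the quantum Euclidean sphere. -/
def SphereAlg (q : ℝ) (N : ℕ) := RingQuot (sphereRel q N)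

noncomputable instance (q : ℝ) (N : ℕ) : Ring (SphereAlg q N) :=
  inferInstanceAs (Ring (RingQuot (sphereRel q N)))

noncomputable instance (q : ℝ) (N : ℕ) : Algebra ℝ (SphereAlg q N) :=
  inferInstanceAs (Algebra ℝ (RingQuot (sphereRel q N)))

/-- The generators x_i of the quantum Euclidean sphere. -/
noncomputable def xgen (q : ℝ) (N : ℕ) (i : Fin N) : SphereAlg q N :=
  RingQuot.mkAlgHom ℝ (sphereRel q N) (FreeAlgebra.ι ℝ i)

/-! ### Auxiliary lemmas -/

lemma pr_pr {N : ℕ} (i : Fin N) : pr (pr i) = i := Fin.rev_rev i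

lemma pr_eq_pr {N : ℕ} {i j : Fin N} : pr i = pr j ↔ i = j := Fin.rev_inj

lemma rho_pr {N : ℕ} (i : Fin N) : rho N (pr i) = -(rho N i) := by
  have hi : (i : ℕ) + 1 ≤ N := i.2
  have hval : ((pr i : Fin N) : ℕ) = N - ((i : ℕ) + 1) := rfl
  unfold rho
  rw [hval]
  rcases lt_trichotomy (2 * ((i : ℕ) + 1)) (N + 1) with h | h | h
  · rw [if_neg (by omega), if_neg (by omega), if_pos h]
    push_cast [Nat.cast_sub hi]
    ring
  · rw [if_neg (by omega), if_pos (by omega), if_neg (by omega), if_pos h]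
    norm_num
  · rw [if_pos (by omega), if_neg (by omega), if_neg (by omega)]
    push_cast [Nat.cast_sub hi]
    ring

section Symm

variable {q : ℝ} {N : ℕ}

lemma rpow_prod2 (hq : 0 < q) {s t : ℝ} (h : s + t = 0) :
    Real.rpow q s * Real.rpow q t = 1 := by
  show q ^ s * q ^ t = 1
  rw [← Real.rpow_add hq, h, Real.rpow_zero]

lemma rpow_prod3 (hq : 0 < q) {s t u : ℝ} (h : s + (t + u) = 0) :
    Real.rpow q s * (Real.rpow q t * Real.rpow q u) = 1 := by
  show q ^ s * (q ^ t * q ^ u) = 1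
  rw [← Real.rpow_add hq, ← Real.rpow_add hq, h, Real.rpow_zero]

lemma Kmat_symm (hq : 0 < q) (k l i j : Fin N) :
    Real.rpow q (rho N i + rho N j) * Kmat q N (k, l) (i, j)
      = Real.rpow q (rho N k + rho N l) * Kmat q N (pr l, pr k) (pr j, pr i) := by
  simp only [Kmat, Cmat, pr_pr]
  by_cases h1 : j = pr i
  · by_cases h2 : l = pr k
    · subst h1; subst h2
      simp [pr_pr, rho_pr, Real.rpow_zero]
    · have h2' : ¬ (pr k = l) := fun h => h2 h.symm
      simp [h2, h2']
  · have h1' : ¬ (pr i = j) := fun h => h1 h.symm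
    simp [h1, h1']

lemma one_symm (k l i j : Fin N) :
    Real.rpow q (rho N i + rho N j) *
        (1 : Matrix (Fin N × Fin N) (Fin N × Fin N) ℝ) (k, l) (i, j)
      = Real.rpow q (rho N k + rho N l) *
        (1 : Matrix (Fin N × Fin N) (Fin N × Fin N) ℝ) (pr l, pr k) (pr j, pr i) := by
  simp only [Matrix.one_apply, Prod.mk.injEq]
  by_cases h1 : k = i
  · by_cases h2 : l = j
    · subst h1; subst h2; simp
    · have h2' : ¬ (pr l = pr j) := fun h => h2 (pr_eq_pr.mp h)
      simp [h2, h2']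
  · have h1' : ¬ (pr k = pr i) := fun h => h1 (pr_eq_pr.mp h)
    simp [h1, h1']

lemma zfac (k l : Fin N) :
    ((if pr l = pr k then 1 else 0) - (if pr l = pr (pr k) then 1 else 0) : ℤ)
      = ((if k = l then 1 else 0) - (if k = pr l then 1 else 0) : ℤ) := by
  rw [if_congr (show pr l = pr k ↔ k = l by rw [pr_eq_pr]; exact eq_comm) rfl rfl,
    if_congr (show pr l = pr (pr k) ↔ k = pr l by rw [pr_pr]; exact eq_comm)
      rfl rfl]

lemma Rhat_apply (q : ℝ) (N : ℕ) (k l i j : Fin N) :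
    Rhat q N (k, l) (i, j) =
      q ^ (((if k = l then 1 else 0) - (if k = pr l then 1 else 0) : ℤ)) *
        (if i = l then (1:ℝ) else 0) * (if j = k then (1:ℝ) else 0)
      + (q - q⁻¹) * (if i < l then (1:ℝ) else 0) *
        ((if i = k then (1:ℝ) else 0) * (if j = l then (1:ℝ) else 0)
          - Kmat q N (k, l) (i, j)) := rfl

lemma Rhat_symm (hq : 0 < q) (k l i j : Fin N) :
    Real.rpow q (rho N i + rho N j) * Rhat q N (k, l) (i, j)
      = Real.rpow q (rho N k + rho N l) * Rhat q N (pr l, pr k) (pr j, pr i) := by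
  have hK := Kmat_symm (q := q) hq k l i j
  rw [Rhat_apply, Rhat_apply, zfac,
    show (if pr j = pr k then (1:ℝ) else 0) = (if j = k then (1:ℝ) else 0) from
      if_congr pr_eq_pr rfl rfl,
    show (if pr i = pr l then (1:ℝ) else 0) = (if i = l then (1:ℝ) else 0) from
      if_congr pr_eq_pr rfl rfl,
    show (if pr j < pr k then (1:ℝ) else 0) = (if k < j then (1:ℝ) else 0) from
      if_congr Fin.rev_lt_rev rfl rfl,
    show (if pr j = pr l then (1:ℝ) else 0) = (if j = l then (1:ℝ) else 0) from
      if_congr pr_eq_pr rfl rfl,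
    show (if pr i = pr k then (1:ℝ) else 0) = (if i = k then (1:ℝ) else 0) from
      if_congr pr_eq_pr rfl rfl]
  have s0 : Real.rpow q (rho N i + rho N j) *
        (q ^ (((if k = l then 1 else 0) - (if k = pr l then 1 else 0) : ℤ)) *
          (if i = l then (1:ℝ) else 0) * (if j = k then (1:ℝ) else 0))
      = Real.rpow q (rho N k + rho N l) *
        (q ^ (((if k = l then 1 else 0) - (if k = pr l then 1 else 0) : ℤ)) *
          (if j = k then (1:ℝ) else 0) * (if i = l then (1:ℝ) else 0)) := by
    by_cases hil : i = l
    · by_cases hjk : j = k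
      · subst hil; subst hjk; rw [add_comm (rho N i) (rho N j)]; ring
      · simp [hjk]
    · simp [hil]
  have s1 : Real.rpow q (rho N i + rho N j) *
        ((if i < l then (1:ℝ) else 0) *
          ((if i = k then (1:ℝ) else 0) * (if j = l then (1:ℝ) else 0)))
      = Real.rpow q (rho N k + rho N l) *
        ((if k < j then (1:ℝ) else 0) *
          ((if j = l then (1:ℝ) else 0) * (if i = k then (1:ℝ) else 0))) := by
    by_cases hik : i = k
    · by_cases hjl : j = l
      · subst hik; subst hjl; ring
      · simp [hjl]
    · simp [hik]
  have s2 : Real.rpow q (rho N i + rho N j) *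
        ((if i < l then (1:ℝ) else 0) * Kmat q N (k, l) (i, j))
      = Real.rpow q (rho N k + rho N l) *
        ((if k < j then (1:ℝ) else 0) * Kmat q N (pr l, pr k) (pr j, pr i)) := by
    by_cases h1 : j = pr i
    · by_cases h2 : l = pr k
      · subst h1; subst h2
        rw [show (if i < pr k then (1:ℝ) else 0) = (if k < pr i then (1:ℝ) else 0) from
          if_congr Fin.lt_rev_iff rfl rfl]
        linear_combination (if k < pr i then (1:ℝ) else 0) * hK
      · have h2' : ¬ (pr k = l) := fun h => h2 h.symm
        simp [Kmat, Cmat, pr_pr, h2, h2']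
    · have h1' : ¬ (pr i = j) := fun h => h1 h.symm
      simp [Kmat, Cmat, pr_pr, h1, h1']
  linear_combination s0 + (q - q⁻¹) * s1 - (q - q⁻¹) * s2

lemma Rm_symm (hq : 0 < q) (k l i j : Fin N) :
    Real.rpow q (rho N i + rho N j) * Rm q N (k, l) (i, j)
      = Real.rpow q (rho N k + rho N l) * Rm q N (pr l, pr k) (pr j, pr i) := by
  simp only [Rm, Matrix.add_apply, Matrix.sub_apply, Matrix.smul_apply, smul_eq_mul]
  linear_combination Rhat_symm hq k l i j - (q - q⁻¹) * one_symm k l i j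
    + (q - q⁻¹) * Kmat_symm hq k l i j

lemma coefRm (hq : 0 < q) (i j a b : Fin N) :
    Rm q N (pr b, pr a) (i, j) *
        (Real.rpow q (-(rho N (pr a))) * Real.rpow q (-(rho N (pr b))))
      = Real.rpow q (-(rho N i + rho N j)) * Rm q N (a, b) (pr j, pr i) := by
  have h := Rm_symm hq (pr b) (pr a) i j
  rw [pr_pr, pr_pr] at h
  have h1 : Real.rpow q (-(rho N i + rho N j)) * Real.rpow q (rho N i + rho N j) = 1 :=
    rpow_prod2 hq (by ring)
  have h2 : Real.rpow q (rho N (pr b) + rho N (pr a)) *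
      (Real.rpow q (-(rho N (pr a))) * Real.rpow q (-(rho N (pr b)))) = 1 :=
    rpow_prod3 hq (by ring)
  linear_combination (Real.rpow q (-(rho N i + rho N j)) *
      (Real.rpow q (-(rho N (pr a))) * Real.rpow q (-(rho N (pr b))))) * h
    - (Rm q N (pr b, pr a) (i, j) *
        (Real.rpow q (-(rho N (pr a))) * Real.rpow q (-(rho N (pr b))))) * h1
    + (Real.rpow q (-(rho N i + rho N j)) * Rm q N (a, b) (pr j, pr i)) * h2

lemma coefK (hq : 0 < q) (i j a b : Fin N) :
    Kmat q N (pr b, pr a) (i, j) *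
        (Real.rpow q (-(rho N (pr a))) * Real.rpow q (-(rho N (pr b))))
      = Real.rpow q (-(rho N i + rho N j)) * Kmat q N (a, b) (pr j, pr i) := by
  have h := Kmat_symm hq (pr b) (pr a) i j
  rw [pr_pr, pr_pr] at h
  have h1 : Real.rpow q (-(rho N i + rho N j)) * Real.rpow q (rho N i + rho N j) = 1 :=
    rpow_prod2 hq (by ring)
  have h2 : Real.rpow q (rho N (pr b) + rho N (pr a)) *
      (Real.rpow q (-(rho N (pr a))) * Real.rpow q (-(rho N (pr b)))) = 1 :=
    rpow_prod3 hq (by ring)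
  linear_combination (Real.rpow q (-(rho N i + rho N j)) *
      (Real.rpow q (-(rho N (pr a))) * Real.rpow q (-(rho N (pr b))))) * h
    - (Kmat q N (pr b, pr a) (i, j) *
        (Real.rpow q (-(rho N (pr a))) * Real.rpow q (-(rho N (pr b))))) * h1
    + (Real.rpow q (-(rho N i + rho N j)) * Kmat q N (a, b) (pr j, pr i)) * h2

end Symm

/-! ### Relations in the sphere algebra -/

lemma quad_rel (q : ℝ) (N : ℕ) (i j : Fin N) :
    ∑ k : Fin N, ∑ l : Fin N, Rm q N (k, l) (i, j) • (xgen q N k * xgen q N l)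
      = q⁻¹ • (xgen q N i * xgen q N j) +
        ((q ^ (N - 1) - q ^ (N - 3)) / (1 + q ^ (N - 2))) •
          ∑ k : Fin N, ∑ l : Fin N, Kmat q N (k, l) (i, j) • (xgen q N k * xgen q N l) := by
  have h := RingQuot.mkAlgHom_rel ℝ (sphereRel.quad (q := q) (N := N) i j)
  simp only [map_sum, _root_.map_smul, _root_.map_mul, map_add] at h
  exact h

lemma unit_rel (q : ℝ) (N : ℕ) :
    ∑ k : Fin N, ∑ l : Fin N, Cmat q N k l • (xgen q N k * xgen q N l) = 1 := by
  have h := RingQuot.mkAlgHom_rel ℝ (sphereRel.unit (q := q) (N := N))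
  simp only [map_sum, _root_.map_smul, _root_.map_mul, _root_.map_one] at h
  exact h

lemma collapseC (q : ℝ) (N : ℕ) {M : Type*} [AddCommMonoid M] [Module ℝ M]
    (g : Fin N → Fin N → M) :
    ∑ k : Fin N, ∑ l : Fin N, Cmat q N k l • g k l
      = ∑ k : Fin N, Real.rpow q (-(rho N k)) • g k (pr k) := by
  refine Finset.sum_congr rfl fun k _ => ?_
  simp only [Cmat, ite_smul, zero_smul, Finset.sum_ite_eq', Finset.mem_univ, if_true]

def swapRev (N : ℕ) : (Fin N × Fin N) ≃ (Fin N × Fin N) where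
  toFun p := (pr p.2, pr p.1)
  invFun p := (pr p.2, pr p.1)
  left_inv p := by simp [pr, Fin.rev_rev]
  right_inv p := by simp [pr, Fin.rev_rev]

lemma reindexSum (N : ℕ) {M : Type*} [AddCommMonoid M] (g : Fin N → Fin N → M) :
    ∑ k : Fin N, ∑ l : Fin N, g k l = ∑ a : Fin N, ∑ b : Fin N, g (pr b) (pr a) := by
  rw [← Fintype.sum_prod_type', ← Fintype.sum_prod_type']
  exact (Fintype.sum_equiv (swapRev N) _ _ (fun p => rfl)).symm

/-- The relation-compatibility of the candidate anti-homomorphism. -/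
lemma hrel_lemma (q : ℝ) (hq : 0 < q) (N : ℕ) :
    ∀ ⦃a b⦄, sphereRel q N a b →
      (FreeAlgebra.lift ℝ (fun i => MulOpposite.op
          (Real.rpow q (-(rho N i)) • xgen q N (pr i))) :
        FreeAlgebra ℝ (Fin N) →ₐ[ℝ] (SphereAlg q N)ᵐᵒᵖ) a
      = (FreeAlgebra.lift ℝ (fun i => MulOpposite.op
          (Real.rpow q (-(rho N i)) • xgen q N (pr i)))) b := by
  intro a b h
  cases h with
  | quad i j =>
    apply MulOpposite.unop_injective
    simp only [map_add, map_sum, _root_.map_smul, _root_.map_mul, FreeAlgebra.lift_ι_apply,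
      MulOpposite.unop_add, Finset.unop_sum, MulOpposite.unop_smul, MulOpposite.unop_mul,
      MulOpposite.unop_op, smul_mul_smul_comm, smul_smul]
    have hL : (∑ k : Fin N, ∑ l : Fin N,
          (Rm q N (k, l) (i, j) *
              (Real.rpow q (-(rho N l)) * Real.rpow q (-(rho N k)))) •
            (xgen q N (pr l) * xgen q N (pr k)))
        = Real.rpow q (-(rho N i + rho N j)) •
            ∑ a : Fin N, ∑ b : Fin N,
              Rm q N (a, b) (pr j, pr i) • (xgen q N a * xgen q N b) := by
      rw [reindexSum N, Finset.smul_sum]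
      refine Finset.sum_congr rfl fun a _ => ?_
      rw [Finset.smul_sum]
      refine Finset.sum_congr rfl fun b _ => ?_
      rw [pr_pr a, pr_pr b, coefRm hq i j a b, mul_smul]
    have hKs : (∑ k : Fin N, ∑ l : Fin N,
          (Kmat q N (k, l) (i, j) *
              (Real.rpow q (-(rho N l)) * Real.rpow q (-(rho N k)))) •
            (xgen q N (pr l) * xgen q N (pr k)))
        = Real.rpow q (-(rho N i + rho N j)) •
            ∑ a : Fin N, ∑ b : Fin N,
              Kmat q N (a, b) (pr j, pr i) • (xgen q N a * xgen q N b) := by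
      rw [reindexSum N, Finset.smul_sum]
      refine Finset.sum_congr rfl fun a _ => ?_
      rw [Finset.smul_sum]
      refine Finset.sum_congr rfl fun b _ => ?_
      rw [pr_pr a, pr_pr b, coefK hq i j a b, mul_smul]
    have hM : Real.rpow q (-(rho N j)) * Real.rpow q (-(rho N i))
        = Real.rpow q (-(rho N i + rho N j)) := by
      show q ^ (-(rho N j)) * q ^ (-(rho N i)) = q ^ (-(rho N i + rho N j))
      rw [← Real.rpow_add hq, show -(rho N j) + -(rho N i) = -(rho N i + rho N j) by ring]
    rw [hL, hKs, hM, quad_rel q N (pr j) (pr i), smul_add, smul_smul,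
      mul_comm (Real.rpow q (-(rho N i + rho N j))) q⁻¹, smul_comm]
  | unit =>
    apply MulOpposite.unop_injective
    simp only [map_sum, _root_.map_smul, _root_.map_mul, _root_.map_one,
      FreeAlgebra.lift_ι_apply, Finset.unop_sum, MulOpposite.unop_smul, MulOpposite.unop_mul,
      MulOpposite.unop_op, MulOpposite.unop_one, smul_mul_smul_comm, smul_smul]
    have h := unit_rel q N
    rw [collapseC] at h
    calc (∑ k : Fin N, ∑ l : Fin N,
          (Cmat q N k l * (Real.rpow q (-(rho N l)) * Real.rpow q (-(rho N k)))) •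
            (xgen q N (pr l) * xgen q N (pr k)))
        = ∑ k : Fin N, Real.rpow q (-(rho N k)) • (xgen q N k * xgen q N (pr k)) := by
          simp only [mul_smul]
          rw [collapseC q N]
          refine Finset.sum_congr rfl fun k _ => ?_
          rw [pr_pr k, smul_smul, smul_smul]
          congr 1
          rw [mul_assoc,
            show Real.rpow q (-(rho N (pr k))) * Real.rpow q (-(rho N k)) = 1 from
              rpow_prod2 hq (by rw [rho_pr]; ring),
            mul_one]
      _ = 1 := h

theorem star_structure (q : ℝ) (hq : 0 < q) (hq1 : q ≠ 1) (N : ℕ) (hN : 3 ≤ N) :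
    ∃ φ : SphereAlg q N →ₗ[ℝ] SphereAlg q N,
      φ 1 = 1 ∧
      (∀ a b : SphereAlg q N, φ (a * b) = φ b * φ a) ∧
      (∀ i : Fin N, φ (xgen q N i) = ∑ j : Fin N, Cmat q N i j • xgen q N j) ∧
      (∀ a : SphereAlg q N, φ (φ a) = a) := by
  classical
  set Φ : SphereAlg q N →ₐ[ℝ] (SphereAlg q N)ᵐᵒᵖ :=
    RingQuot.liftAlgHom ℝ ⟨FreeAlgebra.lift ℝ (fun i => MulOpposite.op
      (Real.rpow q (-(rho N i)) • xgen q N (pr i))), hrel_lemma q hq N⟩ with hΦdef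
  set φ : SphereAlg q N →ₗ[ℝ] SphereAlg q N :=
    { toFun := fun a => MulOpposite.unop (Φ a)
      map_add' := fun a b => by simp only [map_add, MulOpposite.unop_add]
      map_smul' := fun r a => by
        simp only [_root_.map_smul, MulOpposite.unop_smul, RingHom.id_apply] } with hφdef
  have hφ : ∀ a, φ a = MulOpposite.unop (Φ a) := fun a => rfl
  have hgen : ∀ m : Fin N, φ (xgen q N m)
      = Real.rpow q (-(rho N m)) • xgen q N (pr m) := by
    intro m
    have h0 : Φ (xgen q N m)
        = MulOpposite.op (Real.rpow q (-(rho N m)) • xgen q N (pr m)) := by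
      rw [hΦdef, xgen]
      exact Eq.trans (RingQuot.liftAlgHom_mkAlgHom_apply _ _ _ _) (FreeAlgebra.lift_ι_apply _ _)
    rw [hφ, h0, MulOpposite.unop_op]
  have hone : φ 1 = 1 := by rw [hφ, _root_.map_one]; rfl
  have hmul : ∀ a b, φ (a * b) = φ b * φ a := by
    intro a b
    rw [hφ, hφ, hφ, _root_.map_mul, MulOpposite.unop_mul]
  refine ⟨φ, hone, hmul, ?_, ?_⟩
  · intro i
    rw [hgen i]
    symm
    simp only [Cmat, ite_smul, zero_smul, Finset.sum_ite_eq', Finset.mem_univ, if_true]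
  · have hxx : ∀ m : Fin N, φ (φ (xgen q N m)) = xgen q N m := by
      intro m
      rw [hgen m, _root_.map_smul, hgen (pr m), smul_smul, pr_pr,
        show Real.rpow q (-(rho N m)) * Real.rpow q (-(rho N (pr m))) = 1 from
          rpow_prod2 hq (by rw [rho_pr]; ring), one_smul]
    intro a
    obtain ⟨y, rfl⟩ := RingQuot.mkAlgHom_surjective ℝ (sphereRel q N) a
    induction y using FreeAlgebra.induction with
    | grade0 r =>
      rw [AlgHom.commutes, Algebra.algebraMap_eq_smul_one]
      exact (congrArg φ (φ.map_smul r 1)).trans ((φ.map_smul r _).trans (by rw [hone, hone]; rfl))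
    | grade1 m => exact hxx m
    | mul x y hx hy =>
      rw [_root_.map_mul]
      exact (congrArg φ (hmul _ _)).trans ((hmul _ _).trans (congrArg₂ (· * ·) hx hy))
    | add x y hx hy =>
      rw [map_add]
      exact ((congrArg φ (map_add φ _ _)).trans (map_add φ _ _)).trans (congrArg₂ (· + ·) hx hy)
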